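/- Let K be a field, L a finite-dimensional Galois field extension of K, ι a finite index type, b : ι → L a K-basis of L, and b' : ι → L a trace-dual family, i.e. Tr_{L/K}(b(i) · b'(j)) = 1 if i = j and 0 otherwise. Then the K-linear map from the space of functions Gal(L/K) → L to L ⊗_K L sending c to Σ_{σ ∈ Gal(L/K)} Σ_{i ∈ ι} (c(σ) · σ(b(i))) ⊗ b'(i) is bijective. (This identifies the twisted group ring L⟨Gal(L/K)⟩ with L ⊗_K L as K-vector spaces.) -/

import Mathlib

/-!
The twisted group ring L⟨Gal(L/K)⟩ is isomorphic to L ⊗_K L as a K-vector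
space, via σ ↦ Σᵢ σ(bᵢ) ⊗ b'ᵢ for a trace-dual pair of bases.
-/

open scoped BigOperators TensorProduct

section Aux

variable (K L : Type*) [Field K] [Field L] [Algebra K L] [FiniteDimensional K L]
  [IsGalois K L] (ι : Type*) [Fintype ι] [DecidableEq ι]
  (b : Module.Basis ι K L) (b' : ι → L)

open scoped Classical in
lemma twisted_key (hb' : ∀ i j : ι, Algebra.trace K L (b i * b' j) = if i = j then 1 else 0)
    (σ τ : L ≃ₐ[K] L) :
    (∑ i : ι, σ (b i) * τ (b' i)) = if σ = τ then 1 else 0 := by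
  classical
  have hcard : Fintype.card (L ≃ₐ[K] L) = Fintype.card ι := by
    rw [← Nat.card_eq_fintype_card, IsGalois.card_aut_eq_finrank, Module.finrank_eq_card_basis b]
  let e : (L ≃ₐ[K] L) ≃ ι := Fintype.equivOfCardEq hcard
  let A : Matrix (L ≃ₐ[K] L) (L ≃ₐ[K] L) L := fun ρ g => ρ (b (e g))
  let B : Matrix (L ≃ₐ[K] L) (L ≃ₐ[K] L) L := fun g ρ => ρ (b' (e g))
  have hBA : B * A = 1 := by
    ext g h
    simp only [Matrix.mul_apply, Matrix.one_apply]
    simp only [A, B]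
    have : ∑ ρ : L ≃ₐ[K] L, ρ (b' (e g)) * ρ (b (e h))
        = algebraMap K L (Algebra.trace K L (b (e h) * b' (e g))) := by
      rw [trace_eq_sum_automorphisms]
      simp [mul_comm]
    rw [this, hb']
    by_cases hgh : g = h
    · simp [hgh]
    · have : ¬ (e h = e g) := fun h' => hgh (e.injective h'.symm)
      simp [hgh, this]
  have hAB : A * B = 1 := mul_eq_one_comm.mp hBA
  have := congrFun (congrFun hAB σ) τ
  simp only [Matrix.mul_apply, Matrix.one_apply] at this
  simp only [A, B] at this
  rw [← this]
  exact (Equiv.sum_comp e fun i => σ (b i) * τ (b' i)).symm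

end Aux

/-- Let `L/K` be a finite Galois extension, `b : ι → L` a
`K`-basis and `b' : ι → L` a trace-dual family.  Then the `K`-linear map
sending `c : Gal(L/K) → L` to `∑ σ, ∑ i, (c σ * σ (b i)) ⊗ b' i` in `L ⊗_K L`
is bijective. -/
theorem twisted_group_ring_iso_tensor
    (K L : Type*) [Field K] [Field L] [Algebra K L] [FiniteDimensional K L]
    [IsGalois K L] (ι : Type*) [Fintype ι] [DecidableEq ι]
    (b : Module.Basis ι K L) (b' : ι → L)
    (hb' : ∀ i j : ι, Algebra.trace K L (b i * b' j) = if i = j then 1 else 0) :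
    Function.Bijective (fun c : (L ≃ₐ[K] L) → L =>
      ∑ σ : L ≃ₐ[K] L, ∑ i : ι, (c σ * σ (b i)) ⊗ₜ[K] b' i) := by
  classical
  set G := L ≃ₐ[K] L
  let φ : (G → L) →ₗ[K] L ⊗[K] L :=
    { toFun := fun c => ∑ σ : G, ∑ i : ι, (c σ * σ (b i)) ⊗ₜ[K] b' i
      map_add' := by
        intro c d
        rw [← Finset.sum_add_distrib]
        refine Finset.sum_congr rfl fun σ _ => ?_
        rw [← Finset.sum_add_distrib]
        refine Finset.sum_congr rfl fun i _ => ?_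
        simp [add_mul, TensorProduct.add_tmul]
      map_smul' := by
        intro k c
        rw [RingHom.id_apply, Finset.smul_sum]
        refine Finset.sum_congr rfl fun σ _ => ?_
        rw [Finset.smul_sum]
        refine Finset.sum_congr rfl fun i _ => ?_
        simp [Pi.smul_apply, smul_mul_assoc, TensorProduct.smul_tmul'] }
  show Function.Bijective φ
  let Ψ : L ⊗[K] L →ₗ[K] (G → L) :=
    LinearMap.pi (fun τ : G => TensorProduct.lift ((LinearMap.mul K L).compl₂ τ.toLinearMap))
  have hΨφ : ∀ c, Ψ (φ c) = c := by
    intro c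
    funext τ
    have : Ψ (φ c) τ = ∑ σ : G, ∑ i : ι, (c σ * σ (b i)) * τ (b' i) := by
      simp [Ψ, φ, map_sum]
    rw [this]
    have : ∀ σ : G, ∑ i : ι, (c σ * σ (b i)) * τ (b' i)
        = c σ * if σ = τ then 1 else 0 := by
      intro σ
      rw [← twisted_key K L ι b b' hb' σ τ, Finset.mul_sum]
      refine Finset.sum_congr rfl fun i _ => by ring
    rw [Finset.sum_congr rfl fun σ _ => this σ]
    simp
  have hinj : Function.Injective φ := by
    intro c d h
    have := congrArg Ψ h
    rwa [hΨφ, hΨφ] at this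
  refine ⟨hinj, ?_⟩
  have hrank : Module.finrank K (G → L) = Module.finrank K (L ⊗[K] L) := by
    rw [Module.finrank_pi_fintype, Module.finrank_tensorProduct,
      Finset.sum_const, Finset.card_univ]
    show Fintype.card (L ≃ₐ[K] L) • _ = _
    rw [← Nat.card_eq_fintype_card, IsGalois.card_aut_eq_finrank, smul_eq_mul]
  exact (LinearMap.injective_iff_surjective_of_finrank_eq_finrank hrank).mp hinj
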